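/- Fix integers n ≥ 2 and L ≥ 1 and let (D, S) be a compound-binomial degree pair with parameters (n, L). Then for every η ∈ (0, μ(1)) and every δ > 0, P( | D / ((n−1) Γ(1)^{S} Γ(0)^{L−S}) − 1 | > δ ) ≤ 4 e^{−2 L η²} + 2 exp( −Ψ(δ) · (n−1) ( Γ(1)^{μ(1)+η} Γ(0)^{1−μ(1)+η} )^{L} ), where Ψ(x) = (x+1)ln(x+1) − x. -/

import Mathlib

open MeasureTheory ProbabilityTheory Filter Real
open scoped ENNReal NNReal

noncomputable section

/-- A compound-binomial degree pair `(D, S)` with parameters `(n, L)`: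
`S` is Binomial(L, μ1) and, conditionally on `S = ℓ`, `D` is
Binomial(n-1, Γ1^ℓ Γ0^(L-ℓ)); equivalently the joint pmf is as below. -/
def IsCompoundBinomialPair {Ω : Type*} [MeasurableSpace Ω] (P : Measure Ω)
    (μ1 μ0 Γ1 Γ0 : ℝ) (n L : ℕ) (D S : Ω → ℕ) : Prop :=
  Measurable D ∧ Measurable S ∧
    ∀ d ≤ n - 1, ∀ ℓ ≤ L,
      P {ω | D ω = d ∧ S ω = ℓ} =
        ENNReal.ofReal ((L.choose ℓ : ℝ) * μ1 ^ ℓ * μ0 ^ (L - ℓ) *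
          ((n - 1).choose d : ℝ) * (Γ1 ^ ℓ * Γ0 ^ (L - ℓ)) ^ d *
          (1 - Γ1 ^ ℓ * Γ0 ^ (L - ℓ)) ^ (n - 1 - d))

/-- A scaling `n ↦ L n` is `ρ`-admissible if `L n ~ ρ ln n` as `n → ∞`. -/
def IsAdmissible (ρ : ℝ) (L : ℕ → ℕ) : Prop :=
  (∀ n, 0 < L n) ∧
    Tendsto (fun n => (L n : ℝ) / (ρ * Real.log n)) atTop (nhds 1)

/-- `Ψ(x) = (x+1) ln(x+1) - x`. -/
def Psi (x : ℝ) : ℝ := (x + 1) * Real.log (x + 1) - x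

/-- The standard Gaussian distribution function. -/
def Phi (z : ℝ) : ℝ := ∫ t in Set.Iic z, Real.exp (-t ^ 2 / 2) / Real.sqrt (2 * Real.pi)

open Finset

lemma sum_binom' (m : ℕ) (x y : ℝ) :
    ∑ d ∈ Finset.range (m+1), (m.choose d : ℝ) * x ^ d * y ^ (m-d) = (x + y) ^ m := by
  rw [add_pow]
  exact Finset.sum_congr rfl (fun d _ => by ring)

lemma sum_binom (m : ℕ) (p : ℝ) :
    ∑ d ∈ Finset.range (m+1), (m.choose d : ℝ) * p ^ d * (1-p) ^ (m-d) = 1 := by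
  rw [sum_binom']; norm_num

lemma chernoff_ge (m : ℕ) (p a t : ℝ) (hp0 : 0 ≤ p) (hp1 : p ≤ 1) (ht : 0 ≤ t) :
    ∑ d ∈ Finset.range (m+1),
      (if a ≤ (d:ℝ) then (m.choose d : ℝ) * p ^ d * (1-p) ^ (m-d) else 0)
      ≤ Real.exp (-t*a) * (1 - p + p * Real.exp t) ^ m := by
  have h1p : (0:ℝ) ≤ 1 - p := by linarith
  have key : ∀ d ∈ Finset.range (m+1),
      (if a ≤ (d:ℝ) then (m.choose d : ℝ) * p ^ d * (1-p) ^ (m-d) else 0)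
      ≤ Real.exp (-t*a) * ((m.choose d : ℝ) * (p * Real.exp t) ^ d * (1-p) ^ (m-d)) := by
    intro d _
    have hterm : (0:ℝ) ≤ (m.choose d : ℝ) * p ^ d * (1-p) ^ (m-d) := by positivity
    by_cases h : a ≤ (d:ℝ)
    · rw [if_pos h]
      have : Real.exp (-t*a) * ((m.choose d : ℝ) * (p * Real.exp t) ^ d * (1-p) ^ (m-d))
          = Real.exp (t * d - t * a) * ((m.choose d : ℝ) * p ^ d * (1-p) ^ (m-d)) := by
        rw [mul_pow, ← Real.exp_nat_mul,
          show t * (d:ℝ) - t * a = (d:ℝ) * t + -t * a by ring, Real.exp_add]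
        ring
      rw [this]
      have h1 : (1:ℝ) ≤ Real.exp (t * d - t * a) := by
        rw [Real.one_le_exp_iff]
        nlinarith
      nlinarith
    · rw [if_neg h]; positivity
  calc ∑ d ∈ Finset.range (m+1), (if a ≤ (d:ℝ) then (m.choose d : ℝ) * p ^ d * (1-p) ^ (m-d) else 0)
      ≤ ∑ d ∈ Finset.range (m+1), Real.exp (-t*a) * ((m.choose d : ℝ) * (p * Real.exp t) ^ d * (1-p) ^ (m-d)) :=
        Finset.sum_le_sum key
    _ = Real.exp (-t*a) * ∑ d ∈ Finset.range (m+1), ((m.choose d : ℝ) * (p * Real.exp t) ^ d * (1-p) ^ (m-d)) := by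
        rw [Finset.mul_sum]
    _ = Real.exp (-t*a) * (1 - p + p * Real.exp t) ^ m := by
        rw [sum_binom']; ring_nf

lemma chernoff_le (m : ℕ) (p a t : ℝ) (hp0 : 0 ≤ p) (hp1 : p ≤ 1) (ht : t ≤ 0) :
    ∑ d ∈ Finset.range (m+1),
      (if (d:ℝ) ≤ a then (m.choose d : ℝ) * p ^ d * (1-p) ^ (m-d) else 0)
      ≤ Real.exp (-t*a) * (1 - p + p * Real.exp t) ^ m := by
  have h1p : (0:ℝ) ≤ 1 - p := by linarith
  have key : ∀ d ∈ Finset.range (m+1),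
      (if (d:ℝ) ≤ a then (m.choose d : ℝ) * p ^ d * (1-p) ^ (m-d) else 0)
      ≤ Real.exp (-t*a) * ((m.choose d : ℝ) * (p * Real.exp t) ^ d * (1-p) ^ (m-d)) := by
    intro d _
    have hterm : (0:ℝ) ≤ (m.choose d : ℝ) * p ^ d * (1-p) ^ (m-d) := by positivity
    by_cases h : (d:ℝ) ≤ a
    · rw [if_pos h]
      have : Real.exp (-t*a) * ((m.choose d : ℝ) * (p * Real.exp t) ^ d * (1-p) ^ (m-d))
          = Real.exp (t * d - t * a) * ((m.choose d : ℝ) * p ^ d * (1-p) ^ (m-d)) := by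
        rw [mul_pow, ← Real.exp_nat_mul,
          show t * (d:ℝ) - t * a = (d:ℝ) * t + -t * a by ring, Real.exp_add]
        ring
      rw [this]
      have h1 : (1:ℝ) ≤ Real.exp (t * d - t * a) := by
        rw [Real.one_le_exp_iff]
        nlinarith
      nlinarith
    · rw [if_neg h]; positivity
  calc ∑ d ∈ Finset.range (m+1), (if (d:ℝ) ≤ a then (m.choose d : ℝ) * p ^ d * (1-p) ^ (m-d) else 0)
      ≤ ∑ d ∈ Finset.range (m+1), Real.exp (-t*a) * ((m.choose d : ℝ) * (p * Real.exp t) ^ d * (1-p) ^ (m-d)) :=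
        Finset.sum_le_sum key
    _ = Real.exp (-t*a) * ∑ d ∈ Finset.range (m+1), ((m.choose d : ℝ) * (p * Real.exp t) ^ d * (1-p) ^ (m-d)) := by
        rw [Finset.mul_sum]
    _ = Real.exp (-t*a) * (1 - p + p * Real.exp t) ^ m := by
        rw [sum_binom']; ring_nf

lemma psi_nonneg (x : ℝ) (hx : 0 ≤ x) : 0 ≤ Psi x := by
  have hx1 : (0:ℝ) < x + 1 := by linarith
  have h1 : Real.exp (x / (x+1)) ≤ x + 1 := by
    have h := Real.add_one_le_exp (-(x/(x+1)))
    have h2 : -(x/(x+1)) + 1 = 1/(x+1) := by field_simp; ring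
    rw [h2, Real.exp_neg] at h
    have hE := Real.exp_pos (x/(x+1))
    rw [inv_eq_one_div] at h
    exact le_of_one_div_le_one_div hx1 h
  have h2 : x / (x+1) ≤ Real.log (x+1) := by
    rw [← Real.log_exp (x/(x+1))]
    exact Real.log_le_log (Real.exp_pos _) h1
  have h3 : x = (x+1) * (x/(x+1)) := by field_simp
  unfold Psi
  nlinarith [mul_le_mul_of_nonneg_left h2 hx1.le]

lemma lower_ent (x : ℝ) (h0 : 0 ≤ x) (h1 : x < 1) :
    Psi x ≤ (1 - x) * Real.log (1 - x) + x := by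
  set g : ℝ → ℝ := fun y => (1 - y) * Real.log (1 - y) + y - ((y + 1) * Real.log (y + 1) - y) with hg
  have hder : ∀ y ∈ Set.Ico (0:ℝ) 1, HasDerivAt g (-Real.log (1 - y) - Real.log (1 + y)) y := by
    intro y hy
    have hy1 : (1:ℝ) - y ≠ 0 := by simp at hy; intro h; linarith [hy.2]
    have hy2 : y + (1:ℝ) ≠ 0 := by simp at hy; intro h; linarith [hy.1]
    have d1 : HasDerivAt (fun y : ℝ => (1 - y) * Real.log (1 - y))
        ((-1) * Real.log (1 - y) + (1 - y) * ((-1)/(1 - y))) y := by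
      exact (HasDerivAt.mul (by simpa using (hasDerivAt_id y).const_sub 1)
        (((hasDerivAt_id y).const_sub 1).log hy1))
    have d2 : HasDerivAt (fun y : ℝ => (y + 1) * Real.log (y + 1))
        (1 * Real.log (y + 1) + (y + 1) * (1/(y + 1))) y := by
      exact (HasDerivAt.mul (by simpa using (hasDerivAt_id y).add_const 1)
        (((hasDerivAt_id y).add_const 1).log hy2))
    have := ((d1.add (hasDerivAt_id y)).sub (d2.sub (hasDerivAt_id y)))
    refine this.congr_deriv ?_
    have e1 : (1 - y) * ((-1)/(1 - y)) = -1 := by field_simp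
    have e2 : (y + 1) * ((1)/(y + 1)) = 1 := by field_simp
    rw [show Real.log (1 + y) = Real.log (y + 1) by ring_nf]
    rw [e1, e2]
    ring
  have hmono : MonotoneOn g (Set.Ico (0:ℝ) 1) := by
    apply monotoneOn_of_deriv_nonneg (convex_Ico 0 1)
    · exact fun y hy => ((hder y hy).continuousAt).continuousWithinAt
    · intro y hy
      rw [interior_Ico] at hy
      exact ((hder y (Set.mem_Ico_of_Ioo hy)).differentiableAt).differentiableWithinAt
    · intro y hy
      rw [interior_Ico] at hy
      rw [(hder y (Set.mem_Ico_of_Ioo hy)).deriv]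
      have hy1 : (0:ℝ) < 1 - y := by linarith [hy.2]
      have hy2 : (0:ℝ) < 1 + y := by linarith [hy.1]
      have : Real.log (1-y) + Real.log (1+y) = Real.log ((1-y)*(1+y)) :=
        (Real.log_mul hy1.ne' hy2.ne').symm
      have hle : (1-y)*(1+y) ≤ 1 := by nlinarith [sq_nonneg y]
      have := Real.log_nonpos (by positivity) hle
      nlinarith [Real.log_nonpos (by positivity : (0:ℝ) ≤ (1-y)*(1+y)) hle,
        (Real.log_mul hy1.ne' hy2.ne')]
  have h00 : g 0 = 0 := by simp [hg]
  have := hmono (Set.mem_Ico.mpr ⟨le_refl 0, by norm_num⟩) (Set.mem_Ico.mpr ⟨h0, h1⟩) h0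
  rw [h00] at this
  unfold Psi
  simp only [hg] at this
  linarith

lemma bern_mgf (p t : ℝ) (hp0 : 0 ≤ p) (hp1 : p ≤ 1) :
    1 - p + p * Real.exp t ≤ Real.exp (p*t + t^2/8) := by
  set A : ℝ → ℝ := fun s => 1 - p + p * Real.exp s with hA
  have hApos : ∀ s, 0 < A s := by
    intro s
    show (0:ℝ) < 1 - p + p * Real.exp s
    have hE := Real.exp_pos s
    rcases le_or_gt 1 (Real.exp s) with h | h
    · nlinarith
    · nlinarith
  set d : ℝ → ℝ := fun s => p + s/4 - p * Real.exp s / A s with hd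
  set g : ℝ → ℝ := fun s => p * s + s^2/8 - Real.log (A s) with hgdef
  have hAder : ∀ s, HasDerivAt A (p * Real.exp s) s := by
    intro s
    exact ((Real.hasDerivAt_exp s).const_mul p).const_add (1 - p)
  have hgder : ∀ s, HasDerivAt g (d s) s := by
    intro s
    have h1 : HasDerivAt (fun s : ℝ => p * s + s^2/8) (p + s/4) s := by
      have := ((hasDerivAt_id s).const_mul p).add
        (((hasDerivAt_pow 2 s)).div_const 8)
      refine this.congr_deriv ?_
      push_cast; ring
    have h2 : HasDerivAt (fun s => Real.log (A s)) (p * Real.exp s / A s) s :=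
      (hAder s).log (hApos s).ne'
    exact h1.sub h2
  have hdder : ∀ s, HasDerivAt d (1/4 - (1 - p) * (p * Real.exp s) / (A s)^2) s := by
    intro s
    have hq : HasDerivAt (fun s => p * Real.exp s / A s)
        ((p * Real.exp s * A s - p * Real.exp s * (p * Real.exp s)) / (A s)^2) s :=
      ((Real.hasDerivAt_exp s).const_mul p).div (hAder s) (hApos s).ne'
    have h1 : HasDerivAt (fun s : ℝ => p + s/4) (1/4) s := by
      simpa using ((hasDerivAt_id s).div_const 4).const_add p
    have := h1.sub hq
    refine this.congr_deriv ?_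
    have : p * Real.exp s * A s - p * Real.exp s * (p * Real.exp s)
        = (1 - p) * (p * Real.exp s) := by
      simp only [hA]; ring
    rw [this]
  have hdmono : Monotone d := by
    apply monotone_of_deriv_nonneg
    · exact fun s => (hdder s).differentiableAt
    · intro s
      rw [(hdder s).deriv]
      have hAs : A s = 1 - p + p * Real.exp s := rfl
      rw [hAs]
      have hB : (0:ℝ) < 1 - p + p * Real.exp s := by rw [← hAs]; exact hApos s
      rw [sub_nonneg, div_le_iff₀ (by positivity)]
      nlinarith [sq_nonneg ((1-p) - p * Real.exp s)]
  have hd0 : d 0 = 0 := by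
    simp [hd, hA]
  have hg0 : g 0 = 0 := by
    simp [hgdef, hA]
  -- g nonneg
  have hgnn : 0 ≤ g t := by
    rcases le_or_gt 0 t with h | h
    · have hmono : MonotoneOn g (Set.Ici (0:ℝ)) := by
        apply monotoneOn_of_deriv_nonneg (convex_Ici 0)
        · exact fun s _ => (hgder s).continuousAt.continuousWithinAt
        · exact fun s _ => (hgder s).differentiableAt.differentiableWithinAt
        · intro s hs
          rw [interior_Ici] at hs
          rw [(hgder s).deriv]
          calc (0:ℝ) = d 0 := hd0.symm
            _ ≤ d s := hdmono (le_of_lt hs)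
      have := hmono (Set.mem_Ici.mpr (le_refl 0)) (Set.mem_Ici.mpr h) h
      rw [hg0] at this; exact this
    · have hmono : AntitoneOn g (Set.Iic (0:ℝ)) := by
        apply antitoneOn_of_deriv_nonpos (convex_Iic 0)
        · exact fun s _ => (hgder s).continuousAt.continuousWithinAt
        · exact fun s _ => (hgder s).differentiableAt.differentiableWithinAt
        · intro s hs
          rw [interior_Iic] at hs
          rw [(hgder s).deriv]
          calc d s ≤ d 0 := hdmono (le_of_lt hs)
            _ = 0 := hd0
      have := hmono (Set.mem_Iic.mpr h.le) (Set.mem_Iic.mpr (le_refl 0)) h.le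
      rw [hg0] at this; exact this
  have : Real.log (A t) ≤ p * t + t^2/8 := by
    simp only [hgdef] at hgnn; linarith
  calc A t = Real.exp (Real.log (A t)) := (Real.exp_log (hApos t)).symm
    _ ≤ Real.exp (p*t + t^2/8) := Real.exp_le_exp.mpr this

lemma binom_upper (m : ℕ) (p δ : ℝ) (hp0 : 0 ≤ p) (hp1 : p ≤ 1) (hδ : 0 < δ) :
    ∑ d ∈ Finset.range (m+1),
      (if (1+δ) * ((m:ℝ)*p) < (d:ℝ) then (m.choose d : ℝ) * p ^ d * (1-p) ^ (m-d) else 0)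
      ≤ Real.exp (-Psi δ * ((m:ℝ)*p)) := by
  have hδ1 : (0:ℝ) < 1 + δ := by linarith
  have hlog : (0:ℝ) ≤ Real.log (1+δ) := Real.log_nonneg (by linarith)
  have step1 : ∑ d ∈ Finset.range (m+1),
      (if (1+δ) * ((m:ℝ)*p) < (d:ℝ) then (m.choose d : ℝ) * p ^ d * (1-p) ^ (m-d) else 0)
      ≤ ∑ d ∈ Finset.range (m+1),
      (if (1+δ) * ((m:ℝ)*p) ≤ (d:ℝ) then (m.choose d : ℝ) * p ^ d * (1-p) ^ (m-d) else 0) := by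
    apply Finset.sum_le_sum
    intro d _
    by_cases h : (1+δ) * ((m:ℝ)*p) < (d:ℝ)
    · rw [if_pos h, if_pos h.le]
    · rw [if_neg h]
      by_cases h2 : (1+δ) * ((m:ℝ)*p) ≤ (d:ℝ)
      · rw [if_pos h2]; exact mul_nonneg (mul_nonneg (by positivity) (by positivity)) (pow_nonneg (by linarith) _)
      · rw [if_neg h2]
  have step2 := chernoff_ge m p ((1+δ) * ((m:ℝ)*p)) (Real.log (1+δ)) hp0 hp1 hlog
  have hexp : Real.exp (Real.log (1+δ)) = 1 + δ := Real.exp_log hδ1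
  rw [hexp] at step2
  have step3 : Real.exp (-Real.log (1+δ) * ((1+δ) * ((m:ℝ)*p))) * (1 - p + p * (1+δ)) ^ m
      ≤ Real.exp (-Psi δ * ((m:ℝ)*p)) := by
    have h1 : (1 - p + p * (1+δ)) ^ m ≤ Real.exp ((m:ℝ) * (p * δ)) := by
      have e1 : 1 - p + p * (1+δ) = 1 + p * δ := by ring
      rw [e1]
      calc (1 + p * δ) ^ m ≤ (Real.exp (p * δ)) ^ m := by
            apply pow_le_pow_left₀ (by positivity)
            linarith [Real.add_one_le_exp (p * δ)]
        _ = Real.exp ((m:ℝ) * (p * δ)) := by rw [← Real.exp_nat_mul]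
    calc Real.exp (-Real.log (1+δ) * ((1+δ) * ((m:ℝ)*p))) * (1 - p + p * (1+δ)) ^ m
        ≤ Real.exp (-Real.log (1+δ) * ((1+δ) * ((m:ℝ)*p))) * Real.exp ((m:ℝ) * (p * δ)) := by
          apply mul_le_mul_of_nonneg_left h1 (Real.exp_pos _).le
      _ = Real.exp (-Real.log (1+δ) * ((1+δ) * ((m:ℝ)*p)) + (m:ℝ) * (p * δ)) := by
          rw [← Real.exp_add]
      _ = Real.exp (-Psi δ * ((m:ℝ)*p)) := by
          congr 1
          unfold Psi
          have : Real.log (1+δ) = Real.log (δ+1) := by ring_nf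
          rw [this]; ring
  exact le_trans step1 (le_trans step2 step3)

lemma binom_lower (m : ℕ) (p δ : ℝ) (hp0 : 0 ≤ p) (hp1 : p ≤ 1) (hδ : 0 < δ) :
    ∑ d ∈ Finset.range (m+1),
      (if (d:ℝ) < (1-δ) * ((m:ℝ)*p) then (m.choose d : ℝ) * p ^ d * (1-p) ^ (m-d) else 0)
      ≤ Real.exp (-Psi δ * ((m:ℝ)*p)) := by
  rcases le_or_gt 1 δ with hδ1 | hδ1
  · have : ∀ d ∈ Finset.range (m+1),
        (if (d:ℝ) < (1-δ) * ((m:ℝ)*p) then (m.choose d : ℝ) * p ^ d * (1-p) ^ (m-d) else 0) = 0 := by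
      intro d _
      rw [if_neg]
      push_neg
      have h1 : (1-δ) * ((m:ℝ)*p) ≤ 0 := by
        apply mul_nonpos_of_nonpos_of_nonneg (by linarith) (by positivity)
      calc (1-δ) * ((m:ℝ)*p) ≤ 0 := h1
        _ ≤ (d:ℝ) := Nat.cast_nonneg d
    rw [Finset.sum_congr rfl this]
    simp [Real.exp_pos]
    positivity
  · have h1δ : (0:ℝ) < 1 - δ := by linarith
    have hlog : Real.log (1-δ) ≤ 0 := Real.log_nonpos (by linarith) (by linarith)
    have step1 : ∑ d ∈ Finset.range (m+1),
        (if (d:ℝ) < (1-δ) * ((m:ℝ)*p) then (m.choose d : ℝ) * p ^ d * (1-p) ^ (m-d) else 0)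
        ≤ ∑ d ∈ Finset.range (m+1),
        (if (d:ℝ) ≤ (1-δ) * ((m:ℝ)*p) then (m.choose d : ℝ) * p ^ d * (1-p) ^ (m-d) else 0) := by
      apply Finset.sum_le_sum
      intro d _
      by_cases h : (d:ℝ) < (1-δ) * ((m:ℝ)*p)
      · rw [if_pos h, if_pos h.le]
      · rw [if_neg h]
        by_cases h2 : (d:ℝ) ≤ (1-δ) * ((m:ℝ)*p)
        · rw [if_pos h2]; exact mul_nonneg (mul_nonneg (by positivity) (by positivity)) (pow_nonneg (by linarith) _)
        · rw [if_neg h2]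
    have step2 := chernoff_le m p ((1-δ) * ((m:ℝ)*p)) (Real.log (1-δ)) hp0 hp1 hlog
    have hexp : Real.exp (Real.log (1-δ)) = 1 - δ := Real.exp_log h1δ
    rw [hexp] at step2
    have hpδ : p * δ ≤ 1 := by nlinarith
    have step3 : Real.exp (-Real.log (1-δ) * ((1-δ) * ((m:ℝ)*p))) * (1 - p + p * (1-δ)) ^ m
        ≤ Real.exp (-Psi δ * ((m:ℝ)*p)) := by
      have h1 : (1 - p + p * (1-δ)) ^ m ≤ Real.exp ((m:ℝ) * (-(p * δ))) := by
        have e1 : 1 - p + p * (1-δ) = 1 + (-(p * δ)) := by ring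
        rw [e1]
        calc (1 + (-(p*δ))) ^ m ≤ (Real.exp (-(p * δ))) ^ m := by
              apply pow_le_pow_left₀ (by linarith)
              linarith [Real.add_one_le_exp (-(p * δ))]
          _ = Real.exp ((m:ℝ) * (-(p * δ))) := by rw [← Real.exp_nat_mul]
      have hent := lower_ent δ hδ.le hδ1
      have hmp : (0:ℝ) ≤ (m:ℝ) * p := by positivity
      calc Real.exp (-Real.log (1-δ) * ((1-δ) * ((m:ℝ)*p))) * (1 - p + p * (1-δ)) ^ m
          ≤ Real.exp (-Real.log (1-δ) * ((1-δ) * ((m:ℝ)*p))) * Real.exp ((m:ℝ) * (-(p * δ))) := by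
            apply mul_le_mul_of_nonneg_left h1 (Real.exp_pos _).le
        _ = Real.exp (-(((1-δ) * Real.log (1-δ) + δ)) * ((m:ℝ)*p)) := by
            rw [← Real.exp_add]; congr 1; ring
        _ ≤ Real.exp (-Psi δ * ((m:ℝ)*p)) := by
            apply Real.exp_le_exp.mpr
            apply mul_le_mul_of_nonneg_right _ hmp
            linarith
    exact le_trans step1 (le_trans step2 step3)

lemma hoeff_upper (Lm : ℕ) (p η : ℝ) (hp0 : 0 ≤ p) (hp1 : p ≤ 1) (hη : 0 < η) :
    ∑ ℓ ∈ Finset.range (Lm+1),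
      (if (p+η) * (Lm:ℝ) < (ℓ:ℝ) then (Lm.choose ℓ : ℝ) * p ^ ℓ * (1-p) ^ (Lm-ℓ) else 0)
      ≤ Real.exp (-2 * (Lm:ℝ) * η^2) := by
  have step1 : ∑ ℓ ∈ Finset.range (Lm+1),
      (if (p+η) * (Lm:ℝ) < (ℓ:ℝ) then (Lm.choose ℓ : ℝ) * p ^ ℓ * (1-p) ^ (Lm-ℓ) else 0)
      ≤ ∑ ℓ ∈ Finset.range (Lm+1),
      (if (p+η) * (Lm:ℝ) ≤ (ℓ:ℝ) then (Lm.choose ℓ : ℝ) * p ^ ℓ * (1-p) ^ (Lm-ℓ) else 0) := by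
    apply Finset.sum_le_sum
    intro ℓ _
    by_cases h : (p+η) * (Lm:ℝ) < (ℓ:ℝ)
    · rw [if_pos h, if_pos h.le]
    · rw [if_neg h]
      by_cases h2 : (p+η) * (Lm:ℝ) ≤ (ℓ:ℝ)
      · rw [if_pos h2]; exact mul_nonneg (mul_nonneg (by positivity) (by positivity)) (pow_nonneg (by linarith) _)
      · rw [if_neg h2]
  have step2 := chernoff_ge Lm p ((p+η) * (Lm:ℝ)) (4*η) hp0 hp1 (by linarith)
  have step3 : Real.exp (-(4*η) * ((p+η) * (Lm:ℝ))) * (1 - p + p * Real.exp (4*η)) ^ Lm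
      ≤ Real.exp (-2 * (Lm:ℝ) * η^2) := by
    have h1 : (1 - p + p * Real.exp (4*η)) ^ Lm ≤ Real.exp ((Lm:ℝ) * (p * (4*η) + (4*η)^2/8)) := by
      calc (1 - p + p * Real.exp (4*η)) ^ Lm
          ≤ (Real.exp (p * (4*η) + (4*η)^2/8)) ^ Lm := by
            apply pow_le_pow_left₀ _ (bern_mgf p (4*η) hp0 hp1)
            have hE := Real.exp_pos (4*η)
            nlinarith [Real.exp_pos (4*η)]
        _ = Real.exp ((Lm:ℝ) * (p * (4*η) + (4*η)^2/8)) := by rw [← Real.exp_nat_mul]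
    calc Real.exp (-(4*η) * ((p+η) * (Lm:ℝ))) * (1 - p + p * Real.exp (4*η)) ^ Lm
        ≤ Real.exp (-(4*η) * ((p+η) * (Lm:ℝ))) * Real.exp ((Lm:ℝ) * (p * (4*η) + (4*η)^2/8)) :=
          mul_le_mul_of_nonneg_left h1 (Real.exp_pos _).le
      _ = Real.exp (-2 * (Lm:ℝ) * η^2) := by rw [← Real.exp_add]; congr 1; ring
  exact le_trans step1 (le_trans step2 step3)

lemma hoeff_lower (Lm : ℕ) (p η : ℝ) (hp0 : 0 ≤ p) (hp1 : p ≤ 1) (hη : 0 < η) :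
    ∑ ℓ ∈ Finset.range (Lm+1),
      (if (ℓ:ℝ) < (p-η) * (Lm:ℝ) then (Lm.choose ℓ : ℝ) * p ^ ℓ * (1-p) ^ (Lm-ℓ) else 0)
      ≤ Real.exp (-2 * (Lm:ℝ) * η^2) := by
  have step1 : ∑ ℓ ∈ Finset.range (Lm+1),
      (if (ℓ:ℝ) < (p-η) * (Lm:ℝ) then (Lm.choose ℓ : ℝ) * p ^ ℓ * (1-p) ^ (Lm-ℓ) else 0)
      ≤ ∑ ℓ ∈ Finset.range (Lm+1),
      (if (ℓ:ℝ) ≤ (p-η) * (Lm:ℝ) then (Lm.choose ℓ : ℝ) * p ^ ℓ * (1-p) ^ (Lm-ℓ) else 0) := by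
    apply Finset.sum_le_sum
    intro ℓ _
    by_cases h : (ℓ:ℝ) < (p-η) * (Lm:ℝ)
    · rw [if_pos h, if_pos h.le]
    · rw [if_neg h]
      by_cases h2 : (ℓ:ℝ) ≤ (p-η) * (Lm:ℝ)
      · rw [if_pos h2]; exact mul_nonneg (mul_nonneg (by positivity) (by positivity)) (pow_nonneg (by linarith) _)
      · rw [if_neg h2]
  have step2 := chernoff_le Lm p ((p-η) * (Lm:ℝ)) (-(4*η)) hp0 hp1 (by linarith)
  have step3 : Real.exp (-(-(4*η)) * ((p-η) * (Lm:ℝ))) * (1 - p + p * Real.exp (-(4*η))) ^ Lm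
      ≤ Real.exp (-2 * (Lm:ℝ) * η^2) := by
    have h1 : (1 - p + p * Real.exp (-(4*η))) ^ Lm ≤ Real.exp ((Lm:ℝ) * (p * (-(4*η)) + (-(4*η))^2/8)) := by
      calc (1 - p + p * Real.exp (-(4*η))) ^ Lm
          ≤ (Real.exp (p * (-(4*η)) + (-(4*η))^2/8)) ^ Lm := by
            apply pow_le_pow_left₀ _ (bern_mgf p (-(4*η)) hp0 hp1)
            nlinarith [Real.exp_pos (-(4*η))]
        _ = Real.exp ((Lm:ℝ) * (p * (-(4*η)) + (-(4*η))^2/8)) := by rw [← Real.exp_nat_mul]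
    calc Real.exp (-(-(4*η)) * ((p-η) * (Lm:ℝ))) * (1 - p + p * Real.exp (-(4*η))) ^ Lm
        ≤ Real.exp (-(-(4*η)) * ((p-η) * (Lm:ℝ))) * Real.exp ((Lm:ℝ) * (p * (-(4*η)) + (-(4*η))^2/8)) :=
          mul_le_mul_of_nonneg_left h1 (Real.exp_pos _).le
      _ = Real.exp (-2 * (Lm:ℝ) * η^2) := by rw [← Real.exp_add]; congr 1; ring
  exact le_trans step1 (le_trans step2 step3)

lemma inner_bound (p δ : ℝ) (m : ℕ) (hm : 1 ≤ m) (hp0 : 0 < p) (hp1 : p ≤ 1) (hδ : 0 < δ) :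
    ∑ d ∈ Finset.range (m+1),
      (if δ < |(d:ℝ)/((m:ℝ)*p) - 1| then (m.choose d : ℝ) * p ^ d * (1-p) ^ (m-d) else 0)
      ≤ 2 * Real.exp (-Psi δ * ((m:ℝ)*p)) := by
  have hc : (0:ℝ) < (m:ℝ)*p := by
    have : (0:ℝ) < (m:ℝ) := by exact_mod_cast hm
    positivity
  have key : ∀ d ∈ Finset.range (m+1),
      (if δ < |(d:ℝ)/((m:ℝ)*p) - 1| then (m.choose d : ℝ) * p ^ d * (1-p) ^ (m-d) else 0)
      ≤ (if (1+δ) * ((m:ℝ)*p) < (d:ℝ) then (m.choose d : ℝ) * p ^ d * (1-p) ^ (m-d) else 0)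
        + (if (d:ℝ) < (1-δ) * ((m:ℝ)*p) then (m.choose d : ℝ) * p ^ d * (1-p) ^ (m-d) else 0) := by
    intro d _
    have hb : (0:ℝ) ≤ (m.choose d : ℝ) * p ^ d * (1-p) ^ (m-d) :=
      mul_nonneg (mul_nonneg (by positivity) (by positivity)) (pow_nonneg (by linarith) _)
    by_cases h : δ < |(d:ℝ)/((m:ℝ)*p) - 1|
    · rw [if_pos h]
      rcases lt_abs.mp h with h1 | h1
      · have : (1+δ) * ((m:ℝ)*p) < (d:ℝ) := by
          rw [← lt_div_iff₀ hc]
          linarith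
        rw [if_pos this]
        by_cases h2 : (d:ℝ) < (1-δ) * ((m:ℝ)*p)
        · rw [if_pos h2]; linarith
        · rw [if_neg h2]; linarith
      · have : (d:ℝ) < (1-δ) * ((m:ℝ)*p) := by
          rw [← div_lt_iff₀ hc]
          linarith
        rw [if_pos this]
        by_cases h2 : (1+δ) * ((m:ℝ)*p) < (d:ℝ)
        · rw [if_pos h2]; linarith
        · rw [if_neg h2]; linarith
    · rw [if_neg h]
      by_cases h1 : (1+δ) * ((m:ℝ)*p) < (d:ℝ) <;> by_cases h2 : (d:ℝ) < (1-δ) * ((m:ℝ)*p) <;>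
        simp [h1, h2] <;> positivity
  calc ∑ d ∈ Finset.range (m+1),
      (if δ < |(d:ℝ)/((m:ℝ)*p) - 1| then (m.choose d : ℝ) * p ^ d * (1-p) ^ (m-d) else 0)
      ≤ ∑ d ∈ Finset.range (m+1),
        ((if (1+δ) * ((m:ℝ)*p) < (d:ℝ) then (m.choose d : ℝ) * p ^ d * (1-p) ^ (m-d) else 0)
        + (if (d:ℝ) < (1-δ) * ((m:ℝ)*p) then (m.choose d : ℝ) * p ^ d * (1-p) ^ (m-d) else 0)) :=
        Finset.sum_le_sum key
    _ = (∑ d ∈ Finset.range (m+1), (if (1+δ) * ((m:ℝ)*p) < (d:ℝ) then (m.choose d : ℝ) * p ^ d * (1-p) ^ (m-d) else 0))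
        + ∑ d ∈ Finset.range (m+1), (if (d:ℝ) < (1-δ) * ((m:ℝ)*p) then (m.choose d : ℝ) * p ^ d * (1-p) ^ (m-d) else 0) :=
        Finset.sum_add_distrib
    _ ≤ Real.exp (-Psi δ * ((m:ℝ)*p)) + Real.exp (-Psi δ * ((m:ℝ)*p)) :=
        add_le_add (binom_upper m p δ hp0.le hp1 hδ) (binom_lower m p δ hp0.le hp1 hδ)
    _ = 2 * Real.exp (-Psi δ * ((m:ℝ)*p)) := by ring

lemma pmin_le (Γ0 Γ1 μ1 η : ℝ) (hΓ0 : Γ0 ∈ Set.Ioo (0:ℝ) 1) (hΓ1 : Γ1 ∈ Set.Ioo (0:ℝ) 1)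
    (L ℓ : ℕ) (hℓL : ℓ ≤ L)
    (hlow : (μ1-η) * (L:ℝ) ≤ (ℓ:ℝ)) (hhigh : (ℓ:ℝ) ≤ (μ1+η) * (L:ℝ)) :
    (Γ1 ^ (μ1 + η) * Γ0 ^ (1 - μ1 + η)) ^ L ≤ Γ1 ^ ℓ * Γ0 ^ (L - ℓ) := by
  have h10 : (0:ℝ) < Γ1 := hΓ1.1
  have h00 : (0:ℝ) < Γ0 := hΓ0.1
  have e1 : (Γ1 ^ (μ1 + η) * Γ0 ^ (1 - μ1 + η)) ^ L
      = Γ1 ^ ((μ1 + η) * (L:ℝ)) * Γ0 ^ ((1 - μ1 + η) * (L:ℝ)) := by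
    rw [mul_pow, ← Real.rpow_natCast (Γ1 ^ (μ1 + η)) L, ← Real.rpow_natCast (Γ0 ^ (1 - μ1 + η)) L,
      ← Real.rpow_mul h10.le, ← Real.rpow_mul h00.le]
  have e2 : Γ1 ^ ℓ = Γ1 ^ ((ℓ:ℝ)) := (Real.rpow_natCast Γ1 ℓ).symm
  have e3 : Γ0 ^ (L - ℓ) = Γ0 ^ (((L:ℝ) - (ℓ:ℝ))) := by
    rw [← Real.rpow_natCast Γ0 (L - ℓ)]
    congr 1
    push_cast [Nat.cast_sub hℓL]
    ring
  rw [e1, e2, e3]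
  have h1 : Γ1 ^ ((μ1 + η) * (L:ℝ)) ≤ Γ1 ^ ((ℓ:ℝ)) :=
    Real.rpow_le_rpow_of_exponent_ge h10 hΓ1.2.le hhigh
  have h2 : Γ0 ^ ((1 - μ1 + η) * (L:ℝ)) ≤ Γ0 ^ ((L:ℝ) - (ℓ:ℝ)) := by
    apply Real.rpow_le_rpow_of_exponent_ge h00 hΓ0.2.le
    nlinarith
  exact mul_le_mul h1 h2 (Real.rpow_pos_of_pos h00 _).le (Real.rpow_pos_of_pos h10 _).le

lemma real_main (μ1 Γ0 Γ1 η δ : ℝ) (hμ1 : μ1 ∈ Set.Ioo (0:ℝ) 1)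
    (hΓ0 : Γ0 ∈ Set.Ioo (0:ℝ) 1) (hΓ1 : Γ1 ∈ Set.Ioo (0:ℝ) 1)
    (m L : ℕ) (hm : 1 ≤ m) (hL : 1 ≤ L)
    (hη : 0 < η) (hημ : η < μ1) (hδ : 0 < δ) :
    ∑ ℓ ∈ Finset.range (L+1), ∑ d ∈ Finset.range (m+1),
      (if δ < |(d:ℝ)/((m:ℝ) * (Γ1^ℓ * Γ0^(L-ℓ))) - 1| then
        ((L.choose ℓ:ℝ) * μ1^ℓ * (1-μ1)^(L-ℓ)) *
          ((m.choose d:ℝ) * (Γ1^ℓ * Γ0^(L-ℓ))^d * (1 - Γ1^ℓ * Γ0^(L-ℓ))^(m-d)) else 0)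
    ≤ 4 * Real.exp (-2 * (L:ℝ) * η^2)
      + 2 * Real.exp (-Psi δ * ((m:ℝ) * (Γ1^(μ1+η) * Γ0^(1-μ1+η))^L)) := by
  have hΓ10 := hΓ1.1
  have hΓ00 := hΓ0.1
  have hp0 : ∀ ℓ : ℕ, (0:ℝ) < Γ1^ℓ * Γ0^(L-ℓ) := fun ℓ => by positivity
  have hp1 : ∀ ℓ : ℕ, Γ1^ℓ * Γ0^(L-ℓ) ≤ 1 := by
    intro ℓ
    have h1 : Γ1^ℓ ≤ 1 := pow_le_one₀ hΓ10.le hΓ1.2.le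
    have h2 : Γ0^(L-ℓ) ≤ 1 := pow_le_one₀ hΓ00.le hΓ0.2.le
    nlinarith [pow_pos hΓ10 ℓ, pow_pos hΓ00 (L-ℓ)]
  have hq0 : ∀ ℓ : ℕ, (0:ℝ) ≤ (L.choose ℓ:ℝ) * μ1^ℓ * (1-μ1)^(L-ℓ) := by
    intro ℓ
    have := hμ1.1
    have := hμ1.2
    exact mul_nonneg (mul_nonneg (by positivity) (by positivity)) (pow_nonneg (by linarith) _)
  -- per-ℓ reduction
  have stepℓ : ∀ ℓ ∈ Finset.range (L+1),
      (∑ d ∈ Finset.range (m+1),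
      (if δ < |(d:ℝ)/((m:ℝ) * (Γ1^ℓ * Γ0^(L-ℓ))) - 1| then
        ((L.choose ℓ:ℝ) * μ1^ℓ * (1-μ1)^(L-ℓ)) *
          ((m.choose d:ℝ) * (Γ1^ℓ * Γ0^(L-ℓ))^d * (1 - Γ1^ℓ * Γ0^(L-ℓ))^(m-d)) else 0))
      ≤ (if ¬((μ1-η) * (L:ℝ) ≤ (ℓ:ℝ) ∧ (ℓ:ℝ) ≤ (μ1+η) * (L:ℝ)) then
            (L.choose ℓ:ℝ) * μ1^ℓ * (1-μ1)^(L-ℓ) else 0)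
        + ((L.choose ℓ:ℝ) * μ1^ℓ * (1-μ1)^(L-ℓ))
            * (2 * Real.exp (-Psi δ * ((m:ℝ) * (Γ1^(μ1+η) * Γ0^(1-μ1+η))^L))) := by
    intro ℓ hℓ
    have hℓL : ℓ ≤ L := Nat.lt_succ_iff.mp (Finset.mem_range.mp hℓ)
    have hfac : ∀ d : ℕ,
        (if δ < |(d:ℝ)/((m:ℝ) * (Γ1^ℓ * Γ0^(L-ℓ))) - 1| then
          ((L.choose ℓ:ℝ) * μ1^ℓ * (1-μ1)^(L-ℓ)) *
            ((m.choose d:ℝ) * (Γ1^ℓ * Γ0^(L-ℓ))^d * (1 - Γ1^ℓ * Γ0^(L-ℓ))^(m-d)) else 0)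
        = ((L.choose ℓ:ℝ) * μ1^ℓ * (1-μ1)^(L-ℓ)) *
          (if δ < |(d:ℝ)/((m:ℝ) * (Γ1^ℓ * Γ0^(L-ℓ))) - 1| then
            ((m.choose d:ℝ) * (Γ1^ℓ * Γ0^(L-ℓ))^d * (1 - Γ1^ℓ * Γ0^(L-ℓ))^(m-d)) else 0) := by
      intro d; split_ifs <;> ring
    rw [Finset.sum_congr rfl (fun d _ => hfac d), ← Finset.mul_sum]
    by_cases hgood : (μ1-η) * (L:ℝ) ≤ (ℓ:ℝ) ∧ (ℓ:ℝ) ≤ (μ1+η) * (L:ℝ)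
    · rw [if_neg (by simpa using hgood)]
      have hinner := inner_bound (Γ1^ℓ * Γ0^(L-ℓ)) δ m hm (hp0 ℓ) (hp1 ℓ) hδ
      have hmin := pmin_le Γ0 Γ1 μ1 η hΓ0 hΓ1 L ℓ hℓL hgood.1 hgood.2
      have hmono : Real.exp (-Psi δ * ((m:ℝ) * (Γ1^ℓ * Γ0^(L-ℓ))))
          ≤ Real.exp (-Psi δ * ((m:ℝ) * (Γ1^(μ1+η) * Γ0^(1-μ1+η))^L)) := by
        apply Real.exp_le_exp.mpr
        have hψ := psi_nonneg δ hδ.le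
        have hmr : (0:ℝ) ≤ (m:ℝ) := Nat.cast_nonneg m
        have h1 := mul_le_mul_of_nonneg_left (mul_le_mul_of_nonneg_left hmin hmr) hψ
        nlinarith
      have := le_trans hinner (by linarith : 2 * Real.exp (-Psi δ * ((m:ℝ) * (Γ1^ℓ * Γ0^(L-ℓ))))
          ≤ 2 * Real.exp (-Psi δ * ((m:ℝ) * (Γ1^(μ1+η) * Γ0^(1-μ1+η))^L)))
      calc ((L.choose ℓ:ℝ) * μ1^ℓ * (1-μ1)^(L-ℓ)) *
          (∑ d ∈ Finset.range (m+1),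
            (if δ < |(d:ℝ)/((m:ℝ) * (Γ1^ℓ * Γ0^(L-ℓ))) - 1| then
              ((m.choose d:ℝ) * (Γ1^ℓ * Γ0^(L-ℓ))^d * (1 - Γ1^ℓ * Γ0^(L-ℓ))^(m-d)) else 0))
          ≤ ((L.choose ℓ:ℝ) * μ1^ℓ * (1-μ1)^(L-ℓ)) *
            (2 * Real.exp (-Psi δ * ((m:ℝ) * (Γ1^(μ1+η) * Γ0^(1-μ1+η))^L))) :=
            mul_le_mul_of_nonneg_left this (hq0 ℓ)
        _ ≤ 0 + ((L.choose ℓ:ℝ) * μ1^ℓ * (1-μ1)^(L-ℓ)) *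
            (2 * Real.exp (-Psi δ * ((m:ℝ) * (Γ1^(μ1+η) * Γ0^(1-μ1+η))^L))) := by linarith
    · rw [if_pos hgood]
      have hsum1 : ∑ d ∈ Finset.range (m+1),
          (if δ < |(d:ℝ)/((m:ℝ) * (Γ1^ℓ * Γ0^(L-ℓ))) - 1| then
            ((m.choose d:ℝ) * (Γ1^ℓ * Γ0^(L-ℓ))^d * (1 - Γ1^ℓ * Γ0^(L-ℓ))^(m-d)) else 0) ≤ 1 := by
        have hb : ∀ d ∈ Finset.range (m+1),
            (if δ < |(d:ℝ)/((m:ℝ) * (Γ1^ℓ * Γ0^(L-ℓ))) - 1| then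
              ((m.choose d:ℝ) * (Γ1^ℓ * Γ0^(L-ℓ))^d * (1 - Γ1^ℓ * Γ0^(L-ℓ))^(m-d)) else 0)
            ≤ (m.choose d:ℝ) * (Γ1^ℓ * Γ0^(L-ℓ))^d * (1 - Γ1^ℓ * Γ0^(L-ℓ))^(m-d) := by
          intro d _
          have hnn : (0:ℝ) ≤ (m.choose d:ℝ) * (Γ1^ℓ * Γ0^(L-ℓ))^d * (1 - Γ1^ℓ * Γ0^(L-ℓ))^(m-d) :=
            mul_nonneg (mul_nonneg (by positivity) (by positivity))
              (pow_nonneg (by linarith [hp1 ℓ]) _)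
          split_ifs <;> linarith
        calc _ ≤ ∑ d ∈ Finset.range (m+1),
              (m.choose d:ℝ) * (Γ1^ℓ * Γ0^(L-ℓ))^d * (1 - Γ1^ℓ * Γ0^(L-ℓ))^(m-d) :=
              Finset.sum_le_sum hb
          _ = 1 := sum_binom m (Γ1^ℓ * Γ0^(L-ℓ))
      have h2 : (0:ℝ) ≤ ((L.choose ℓ:ℝ) * μ1^ℓ * (1-μ1)^(L-ℓ))
          * (2 * Real.exp (-Psi δ * ((m:ℝ) * (Γ1^(μ1+η) * Γ0^(1-μ1+η))^L))) := by
        apply mul_nonneg (hq0 ℓ) (by positivity)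
      have := mul_le_mul_of_nonneg_left hsum1 (hq0 ℓ)
      linarith
  have main := Finset.sum_le_sum stepℓ
  rw [Finset.sum_add_distrib] at main
  -- second part
  have hqsum : ∑ ℓ ∈ Finset.range (L+1), (L.choose ℓ:ℝ) * μ1^ℓ * (1-μ1)^(L-ℓ) = 1 :=
    sum_binom L μ1
  have part2 : ∑ ℓ ∈ Finset.range (L+1), ((L.choose ℓ:ℝ) * μ1^ℓ * (1-μ1)^(L-ℓ))
      * (2 * Real.exp (-Psi δ * ((m:ℝ) * (Γ1^(μ1+η) * Γ0^(1-μ1+η))^L)))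
      = 2 * Real.exp (-Psi δ * ((m:ℝ) * (Γ1^(μ1+η) * Γ0^(1-μ1+η))^L)) := by
    rw [← Finset.sum_mul, hqsum, one_mul]
  -- first part: bad ℓ
  have part1 : ∑ ℓ ∈ Finset.range (L+1),
      (if ¬((μ1-η) * (L:ℝ) ≤ (ℓ:ℝ) ∧ (ℓ:ℝ) ≤ (μ1+η) * (L:ℝ)) then
        (L.choose ℓ:ℝ) * μ1^ℓ * (1-μ1)^(L-ℓ) else 0)
      ≤ 2 * Real.exp (-2 * (L:ℝ) * η^2) := by
    have hterm : ∀ ℓ ∈ Finset.range (L+1),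
        (if ¬((μ1-η) * (L:ℝ) ≤ (ℓ:ℝ) ∧ (ℓ:ℝ) ≤ (μ1+η) * (L:ℝ)) then
          (L.choose ℓ:ℝ) * μ1^ℓ * (1-μ1)^(L-ℓ) else 0)
        ≤ (if (μ1+η) * (L:ℝ) < (ℓ:ℝ) then (L.choose ℓ:ℝ) * μ1^ℓ * (1-μ1)^(L-ℓ) else 0)
          + (if (ℓ:ℝ) < (μ1-η) * (L:ℝ) then (L.choose ℓ:ℝ) * μ1^ℓ * (1-μ1)^(L-ℓ) else 0) := by
      intro ℓ _
      by_cases h : ¬((μ1-η) * (L:ℝ) ≤ (ℓ:ℝ) ∧ (ℓ:ℝ) ≤ (μ1+η) * (L:ℝ))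
      · rw [if_pos h]
        push_neg at h
        rcases lt_or_ge (ℓ:ℝ) ((μ1-η) * (L:ℝ)) with h1 | h1
        · rw [if_pos h1]
          by_cases h2 : (μ1+η) * (L:ℝ) < (ℓ:ℝ)
          · rw [if_pos h2]; linarith [hq0 ℓ]
          · rw [if_neg h2]; linarith [hq0 ℓ]
        · have h2 : (μ1+η) * (L:ℝ) < (ℓ:ℝ) := h h1
          rw [if_pos h2, if_neg (by linarith)]
          linarith [hq0 ℓ]
      · rw [if_neg h]
        by_cases h1 : (μ1+η) * (L:ℝ) < (ℓ:ℝ) <;> by_cases h2 : (ℓ:ℝ) < (μ1-η) * (L:ℝ) <;>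
          simp [h1, h2] <;> (try linarith [hq0 ℓ]) <;> positivity
    calc _ ≤ ∑ ℓ ∈ Finset.range (L+1),
          ((if (μ1+η) * (L:ℝ) < (ℓ:ℝ) then (L.choose ℓ:ℝ) * μ1^ℓ * (1-μ1)^(L-ℓ) else 0)
          + (if (ℓ:ℝ) < (μ1-η) * (L:ℝ) then (L.choose ℓ:ℝ) * μ1^ℓ * (1-μ1)^(L-ℓ) else 0)) :=
          Finset.sum_le_sum hterm
      _ = (∑ ℓ ∈ Finset.range (L+1),
            (if (μ1+η) * (L:ℝ) < (ℓ:ℝ) then (L.choose ℓ:ℝ) * μ1^ℓ * (1-μ1)^(L-ℓ) else 0))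
          + ∑ ℓ ∈ Finset.range (L+1),
            (if (ℓ:ℝ) < (μ1-η) * (L:ℝ) then (L.choose ℓ:ℝ) * μ1^ℓ * (1-μ1)^(L-ℓ) else 0) :=
          Finset.sum_add_distrib
      _ ≤ Real.exp (-2 * (L:ℝ) * η^2) + Real.exp (-2 * (L:ℝ) * η^2) :=
          add_le_add (hoeff_upper L μ1 η hμ1.1.le hμ1.2.le hη) (hoeff_lower L μ1 η hμ1.1.le hμ1.2.le hη)
      _ = 2 * Real.exp (-2 * (L:ℝ) * η^2) := by ring
  have hε1 : (0:ℝ) ≤ Real.exp (-2 * (L:ℝ) * η^2) := (Real.exp_pos _).le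
  calc ∑ ℓ ∈ Finset.range (L+1), ∑ d ∈ Finset.range (m+1),
      (if δ < |(d:ℝ)/((m:ℝ) * (Γ1^ℓ * Γ0^(L-ℓ))) - 1| then
        ((L.choose ℓ:ℝ) * μ1^ℓ * (1-μ1)^(L-ℓ)) *
          ((m.choose d:ℝ) * (Γ1^ℓ * Γ0^(L-ℓ))^d * (1 - Γ1^ℓ * Γ0^(L-ℓ))^(m-d)) else 0)
      ≤ _ + _ := main
    _ ≤ 2 * Real.exp (-2 * (L:ℝ) * η^2)
        + 2 * Real.exp (-Psi δ * ((m:ℝ) * (Γ1^(μ1+η) * Γ0^(1-μ1+η))^L)) := by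
        rw [part2]; exact add_le_add_left part1 _
    _ ≤ 4 * Real.exp (-2 * (L:ℝ) * η^2)
        + 2 * Real.exp (-Psi δ * ((m:ℝ) * (Γ1^(μ1+η) * Γ0^(1-μ1+η))^L)) := by linarith


/-- explicit bound for the deviation of the ratio of the degree to
its conditional mean. -/
theorem stmt15 {Ω : Type*} [MeasurableSpace Ω] (P : Measure Ω) [IsProbabilityMeasure P]
    (μ0 μ1 Γ0 Γ1 : ℝ) (hμ0 : μ0 ∈ Set.Ioo (0:ℝ) 1) (hμ1 : μ1 ∈ Set.Ioo (0:ℝ) 1)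
    (hμ : μ0 + μ1 = 1) (hΓ0 : Γ0 ∈ Set.Ioo (0:ℝ) 1) (hΓ1 : Γ1 ∈ Set.Ioo (0:ℝ) 1)
    (n L : ℕ) (hn : 2 ≤ n) (hL : 1 ≤ L) (D S : Ω → ℕ)
    (hDS : IsCompoundBinomialPair P μ1 μ0 Γ1 Γ0 n L D S) :
    ∀ η ∈ Set.Ioo (0:ℝ) μ1, ∀ δ : ℝ, 0 < δ →
      P {ω | |(D ω : ℝ) / (((n : ℝ) - 1) * Γ1 ^ (S ω) * Γ0 ^ (L - S ω)) - 1| > δ} ≤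
        ENNReal.ofReal (4 * Real.exp (-2 * L * η ^ 2) +
          2 * Real.exp (-Psi δ * ((n : ℝ) - 1) *
            (Γ1 ^ (μ1 + η) * Γ0 ^ (1 - μ1 + η)) ^ L)) := by
  obtain ⟨hD, hS, hpmf⟩ := hDS
  classical
  intro η hηmem δ hδ
  obtain ⟨hη, hημ⟩ := hηmem
  have hμ0' : μ0 = 1 - μ1 := by linarith
  subst hμ0'
  have hm1 : 1 ≤ n - 1 := by omega
  have hmcast : ((n - 1 : ℕ) : ℝ) = (n:ℝ) - 1 := by
    have h1 : (1:ℕ) ≤ n := by omega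
    push_cast [Nat.cast_sub h1]
    ring
  set A : Finset (ℕ × ℕ) := Finset.range (L+1) ×ˢ Finset.range ((n-1)+1) with hA
  set f : ℕ × ℕ → Set Ω := fun x => {ω | D ω = x.2 ∧ S ω = x.1} with hf
  set pm : ℕ × ℕ → ℝ := fun x =>
    (L.choose x.1 : ℝ) * μ1 ^ x.1 * (1 - μ1) ^ (L - x.1) *
      ((n - 1).choose x.2 : ℝ) * (Γ1 ^ x.1 * Γ0 ^ (L - x.1)) ^ x.2 *
      (1 - Γ1 ^ x.1 * Γ0 ^ (L - x.1)) ^ (n - 1 - x.2) with hpm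
  have hmeas : ∀ x : ℕ × ℕ, MeasurableSet (f x) := by
    intro x
    exact (hD (measurableSet_singleton x.2)).inter (hS (measurableSet_singleton x.1))
  have hdisj : (A : Set (ℕ × ℕ)).PairwiseDisjoint f := by
    intro x _ y _ hxy
    apply Set.disjoint_left.mpr
    rintro ω ⟨hd1, hs1⟩ ⟨hd2, hs2⟩
    exact hxy (Prod.ext (hs1 ▸ hs2 ▸ rfl) (hd1 ▸ hd2 ▸ rfl))
  have hPf : ∀ x ∈ A, P (f x) = ENNReal.ofReal (pm x) := by
    intro x hx
    rw [hA, Finset.mem_product, Finset.mem_range, Finset.mem_range] at hx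
    exact hpmf x.2 (Nat.lt_succ_iff.mp hx.2) x.1 (Nat.lt_succ_iff.mp hx.1)
  have hp1 : ∀ ℓ : ℕ, Γ1^ℓ * Γ0^(L-ℓ) ≤ 1 := by
    intro ℓ
    have h1 : Γ1^ℓ ≤ 1 := pow_le_one₀ hΓ1.1.le hΓ1.2.le
    have h2 : Γ0^(L-ℓ) ≤ 1 := pow_le_one₀ hΓ0.1.le hΓ0.2.le
    nlinarith [pow_pos hΓ1.1 ℓ, pow_pos hΓ0.1 (L-ℓ)]
  have hpmnn : ∀ x : ℕ × ℕ, 0 ≤ pm x := by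
    intro x
    have h1 : (0:ℝ) ≤ 1 - μ1 := by linarith [hμ1.2]
    have h2 : (0:ℝ) ≤ 1 - Γ1 ^ x.1 * Γ0 ^ (L - x.1) := by linarith [hp1 x.1]
    have h3 : (0:ℝ) < Γ1 := hΓ1.1
    have h4 : (0:ℝ) < Γ0 := hΓ0.1
    have h5 : (0:ℝ) < μ1 := hμ1.1
    apply mul_nonneg (mul_nonneg (mul_nonneg (mul_nonneg (mul_nonneg (by positivity)
      (by positivity)) (pow_nonneg h1 _)) (by positivity)) (by positivity)) (pow_nonneg h2 _)
  -- total mass of the grid is 1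
  have hsumpm : ∑ x ∈ A, pm x = 1 := by
    rw [hA, Finset.sum_product]
    have hinner : ∀ ℓ ∈ Finset.range (L+1),
        ∑ d ∈ Finset.range ((n-1)+1), pm (ℓ, d)
        = (L.choose ℓ : ℝ) * μ1 ^ ℓ * (1 - μ1) ^ (L - ℓ) := by
      intro ℓ _
      have : ∀ d ∈ Finset.range ((n-1)+1), pm (ℓ, d)
          = ((L.choose ℓ : ℝ) * μ1 ^ ℓ * (1 - μ1) ^ (L - ℓ)) *
            (((n-1).choose d : ℝ) * (Γ1 ^ ℓ * Γ0 ^ (L - ℓ)) ^ d *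
              (1 - Γ1 ^ ℓ * Γ0 ^ (L - ℓ)) ^ (n - 1 - d)) := by
        intro d _
        simp only [hpm]
        ring
      rw [Finset.sum_congr rfl this, ← Finset.mul_sum, sum_binom (n-1) (Γ1 ^ ℓ * Γ0 ^ (L - ℓ)),
        mul_one]
    rw [Finset.sum_congr rfl hinner]
    exact sum_binom L μ1
  set T : Set Ω := ⋃ x ∈ A, f x with hT
  have hTmeas : MeasurableSet T := Finset.measurableSet_biUnion A (fun x _ => hmeas x)
  have hPT : P T = 1 := by
    rw [hT, measure_biUnion_finset hdisj (fun x _ => hmeas x),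
      Finset.sum_congr rfl hPf, ← ENNReal.ofReal_sum_of_nonneg (fun x _ => hpmnn x), hsumpm,
      ENNReal.ofReal_one]
  have hPTc : P Tᶜ = 0 := by
    rw [measure_compl hTmeas (MeasureTheory.measure_ne_top P T), hPT, measure_univ]
    simp
  -- the event
  set E : Set Ω := {ω | |(D ω : ℝ) / (((n : ℝ) - 1) * Γ1 ^ (S ω) * Γ0 ^ (L - S ω)) - 1| > δ}
    with hE
  set B : Finset (ℕ × ℕ) := A.filter (fun x =>
    δ < |(x.2:ℝ) / (((n : ℝ) - 1) * Γ1 ^ x.1 * Γ0 ^ (L - x.1)) - 1|) with hB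
  have hEsub : E ⊆ (⋃ x ∈ B, f x) ∪ Tᶜ := by
    intro ω hω
    by_cases hωT : ω ∈ T
    · left
      simp only [hT, Set.mem_iUnion] at hωT
      obtain ⟨x, hxA, hxf⟩ := hωT
      simp only [Set.mem_iUnion]
      refine ⟨x, ?_, hxf⟩
      rw [hB, Finset.mem_filter]
      refine ⟨hxA, ?_⟩
      have hd : D ω = x.2 := hxf.1
      have hs : S ω = x.1 := hxf.2
      have := hω
      rw [hE, Set.mem_setOf_eq, hd, hs] at this
      exact this
    · right; exact hωT
  calc P E ≤ P ((⋃ x ∈ B, f x) ∪ Tᶜ) := measure_mono hEsub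
    _ ≤ P (⋃ x ∈ B, f x) + P Tᶜ := measure_union_le _ _
    _ = P (⋃ x ∈ B, f x) := by rw [hPTc, add_zero]
    _ ≤ ∑ x ∈ B, P (f x) := measure_biUnion_finset_le B f
    _ = ∑ x ∈ B, ENNReal.ofReal (pm x) := by
        apply Finset.sum_congr rfl
        intro x hx
        exact hPf x (Finset.mem_filter.mp (hB ▸ hx)).1
    _ = ENNReal.ofReal (∑ x ∈ B, pm x) :=
        (ENNReal.ofReal_sum_of_nonneg (fun x _ => hpmnn x)).symm
    _ ≤ ENNReal.ofReal (4 * Real.exp (-2 * L * η ^ 2) +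
          2 * Real.exp (-Psi δ * ((n : ℝ) - 1) *
            (Γ1 ^ (μ1 + η) * Γ0 ^ (1 - μ1 + η)) ^ L)) := by
        apply ENNReal.ofReal_le_ofReal
        have hrewrite : ∑ x ∈ B, pm x
            = ∑ ℓ ∈ Finset.range (L+1), ∑ d ∈ Finset.range ((n-1)+1),
              (if δ < |(d:ℝ)/(((n-1:ℕ):ℝ) * (Γ1^ℓ * Γ0^(L-ℓ))) - 1| then
                ((L.choose ℓ:ℝ) * μ1^ℓ * (1-μ1)^(L-ℓ)) *
                  (((n-1).choose d:ℝ) * (Γ1^ℓ * Γ0^(L-ℓ))^d *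
                    (1 - Γ1^ℓ * Γ0^(L-ℓ))^(n-1-d)) else 0) := by
          rw [hB, Finset.sum_filter, hA, Finset.sum_product]
          apply Finset.sum_congr rfl
          intro ℓ _
          apply Finset.sum_congr rfl
          intro d _
          have hden : ((n:ℝ) - 1) * Γ1 ^ ℓ * Γ0 ^ (L - ℓ)
              = ((n-1:ℕ):ℝ) * (Γ1^ℓ * Γ0^(L-ℓ)) := by rw [hmcast]; ring
          rw [hden]
          split_ifs with h
          · simp only [hpm]; ring
          · rfl
        rw [hrewrite]
        have hmain := real_main μ1 Γ0 Γ1 η δ hμ1 hΓ0 hΓ1 (n-1) L hm1 hL hη hημ hδ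
        refine le_trans hmain ?_
        apply le_of_eq
        congr 2
        rw [hmcast]
        ring
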